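/- Let A, B ∈ ℂ^{m×n} and W ∈ ℂ^{n×m} with (A·W)·(B·W) = (B·W)·(A·W), and let k be a natural number with k = max{ind(AW), ind(BW), ind(AWBW)}. Suppose Y₂ ∈ ℂ^{m×n} is a W-weighted weak Drazin inverse of B, i.e. Y₂·W·(B·W)^{k+1} = (B·W)^k, and Z₁ ∈ ℂ^{m×n} is a W-weighted weak Drazin inverse of A, i.e. Z₁·W·(A·W)^{k+1} = (A·W)^k. Then Y₂·W·Z₁ is a W-weighted weak Drazin inverse of A·W·B, i.e. (Y₂·W·Z₁)·W·(A·W·B·W)^{k+1} = (A·W·B·W)^k. -/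
import Mathlib


open Matrix

/-- The index of a square complex matrix: the least `j` with `rank (M^j) = rank (M^(j+1))`. -/
noncomputable def matIndex {p : ℕ} (M : Matrix (Fin p) (Fin p) ℂ) : ℕ :=
  sInf {j : ℕ | (M ^ j).rank = (M ^ (j + 1)).rank}

/-- The column space of a complex matrix: the range of `v ↦ M *ᵥ v`. -/
noncomputable def colSpace {a b : ℕ} (M : Matrix (Fin a) (Fin b) ℂ) :
    Submodule ℂ (Fin a → ℂ) :=
  LinearMap.range M.mulVecLin

/-- The null space of a complex matrix: the kernel of `v ↦ M *ᵥ v`. -/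
noncomputable def nullSpace {a b : ℕ} (M : Matrix (Fin a) (Fin b) ℂ) :
    Submodule ℂ (Fin b → ℂ) :=
  LinearMap.ker M.mulVecLin


/-- **Theorem 3.25.** Reverse order law for the W-weighted weak Drazin inverse:
`Y₂·W·Z₁` is a W-weighted weak Drazin inverse of `A·W·B`. -/
theorem weighted_weak_Drazin_reverse_order {m n : ℕ}
    (A B : Matrix (Fin m) (Fin n) ℂ) (W : Matrix (Fin n) (Fin m) ℂ)
    (hcomm : (A * W) * (B * W) = (B * W) * (A * W))
    (k : ℕ)
    (hk : k = max (max (matIndex (A * W)) (matIndex (B * W))) (matIndex (A * W * B * W)))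
    (Y₂ : Matrix (Fin m) (Fin n) ℂ)
    (hY₂ : Y₂ * W * (B * W) ^ (k + 1) = (B * W) ^ k)
    (Z₁ : Matrix (Fin m) (Fin n) ℂ)
    (hZ₁ : Z₁ * W * (A * W) ^ (k + 1) = (A * W) ^ k) :
    (Y₂ * W * Z₁) * W * (A * W * B * W) ^ (k + 1) = (A * W * B * W) ^ k := by
  have h : Commute (A * W) (B * W) := hcomm
  have hAB : A * W * B * W = (A * W) * (B * W) := by rw [Matrix.mul_assoc]
  rw [hAB, h.mul_pow, h.mul_pow]
  calc Y₂ * W * Z₁ * W * ((A * W) ^ (k + 1) * (B * W) ^ (k + 1))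
      = Y₂ * W * (Z₁ * W * (A * W) ^ (k + 1)) * (B * W) ^ (k + 1) := by
        simp [Matrix.mul_assoc]
    _ = Y₂ * W * ((A * W) ^ k * (B * W) ^ (k + 1)) := by rw [hZ₁]; simp [Matrix.mul_assoc]
    _ = Y₂ * W * ((B * W) ^ (k + 1) * (A * W) ^ k) := by rw [(h.symm.pow_pow _ _)]
    _ = Y₂ * W * (B * W) ^ (k + 1) * (A * W) ^ k := by simp [Matrix.mul_assoc]
    _ = (A * W) ^ k * (B * W) ^ k := by rw [hY₂, ← (h.pow_pow _ _)]
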